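/- Rate of convergence of the dyadic Euler scheme to the Skorohod-map solution: fix T > 0, n ≥ 1, continuous f₁,…,f_n : [0,T] → ℝ with f_i(0) ≥ 0 for each i, and K ≥ 0, with initial velocity v = 0. Let (I, V) be the solution of the Skorohod system for (f, 0, K). Then for every positive integer l, sup_{t ∈ [0,T]} |I^{(2^{-l})}(t) − I(t)| ≤ ((2 + K) ‖f‖_{[0,T]} / n) · 2^{-l} · exp(K T). -/

import Mathlib

open Set MeasureTheory

/-- The Skorohod reflection term: `m_f(t) = sup_{0 ≤ s ≤ t} max(-f(s), 0)`. -/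
noncomputable def mf (f : ℝ → ℝ) (t : ℝ) : ℝ :=
  sSup ((fun s => max (-f s) 0) '' Set.Icc 0 t)

/-- `(I, V)` is a solution of the multiparticle Skorohod system for data `(f, v, K)`:
with `m_i(t) = sup_{0 ≤ s ≤ t} max(-(f_i(s) + I(s)), 0)`, one has
`V(t) = -v + (K/n) ∑ᵢ m_i(t)` and `I(t) = ∫₀ᵗ V(s) ds` on `[0,T]`. -/
def IsSkorohodSystemSol (T : ℝ) (n : ℕ) (f : Fin n → ℝ → ℝ) (v K : ℝ)
    (I V : ℝ → ℝ) : Prop :=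
  ContinuousOn I (Set.Icc 0 T) ∧ ContinuousOn V (Set.Icc 0 T) ∧
  (∀ t ∈ Set.Icc 0 T,
    V t = -v + (K / (n : ℝ)) * ∑ i, mf (fun s => f i s + I s) t) ∧
  (∀ t ∈ Set.Icc 0 T, I t = ∫ s in (0:ℝ)..t, V s)

/-- `J` is the piecewise linear Euler approximation with mesh `ε` for the data
`(f, K)` (initial velocity `v = 0`): `J ≡ 0` on `[0, ε] ∩ [0,T]`, and on each
subsequent grid interval `[Mε, (M+1)ε] ∩ [0,T]` (for `M ≥ 1`) it is linear with slope
`(K/n) ∑ᵢ sup_{0 ≤ u ≤ Mε} max(-(f_i(u) + J(u)), 0)`. -/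
def IsEulerApprox (T : ℝ) (n : ℕ) (f : Fin n → ℝ → ℝ) (K ε : ℝ)
    (J : ℝ → ℝ) : Prop :=
  (∀ t ∈ Set.Icc 0 (min ε T), J t = 0) ∧
  ∀ M : ℕ, 1 ≤ M →
    ∀ t ∈ Set.Icc ((M : ℝ) * ε) (((M : ℝ) + 1) * ε) ∩ Set.Icc (0:ℝ) T,
      J t = J ((M : ℝ) * ε) +
        (K / (n : ℝ)) *
          (∑ i, sSup ((fun u => max (-(f i u + J u)) 0) '' Set.Icc 0 ((M : ℝ) * ε))) *
          (t - (M : ℝ) * ε)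

set_option maxHeartbeats 1000000 in
/-- Rate of convergence of the dyadic Euler scheme to the Skorohod-map solution:
`sup_{t ∈ [0,T]} |I^{(2^{-l})}(t) - I(t)| ≤ ((2 + K) ‖f‖_{[0,T]} / n) 2^{-l} exp(KT)`. -/
theorem stmt_15 (T : ℝ) (hT : 0 < T) (n : ℕ) (hn : 1 ≤ n)
    (f : Fin n → ℝ → ℝ) (hf : ∀ i, ContinuousOn (f i) (Set.Icc 0 T))
    (hf0 : ∀ i, 0 ≤ f i 0) (K : ℝ) (hK : 0 ≤ K)
    (l : ℕ) (hl : 1 ≤ l)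
    (Jl : ℝ → ℝ) (hJl : IsEulerApprox T n f K ((2 : ℝ) ^ (-(l : ℤ))) Jl)
    (I V : ℝ → ℝ) (hsol : IsSkorohodSystemSol T n f 0 K I V) :
    sSup ((fun t => |Jl t - I t|) '' Set.Icc 0 T) ≤
      ((2 + K) * (∑ i, sSup ((fun t => |f i t|) '' Set.Icc 0 T)) / (n : ℝ)) *
        (2 : ℝ) ^ (-(l : ℤ)) * Real.exp (K * T) := by
  obtain ⟨hIc, hVc, hVeq, hIeq⟩ := hsol
  obtain ⟨hJ0, hJrec⟩ := hJl
  set ε : ℝ := (2:ℝ) ^ (-(l:ℤ)) with hεdef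
  have hε : 0 < ε := by positivity
  have hn0 : (0:ℝ) < n := by exact_mod_cast hn
  set Fi : Fin n → ℝ := fun i => sSup ((fun t => |f i t|) '' Set.Icc 0 T) with hFidef
  have hFibdd : ∀ i, BddAbove ((fun t => |f i t|) '' Icc (0:ℝ) T) := fun i =>
    (isCompact_Icc.image_of_continuousOn (hf i).abs).bddAbove
  have hFi_le : ∀ i, ∀ t ∈ Icc (0:ℝ) T, |f i t| ≤ Fi i := fun i t ht =>
    le_csSup (hFibdd i) (mem_image_of_mem _ ht)
  have hFi0 : ∀ i, 0 ≤ Fi i := fun i =>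
    le_trans (abs_nonneg _) (hFi_le i 0 ⟨le_refl 0, hT.le⟩)
  have hm_nonneg : ∀ (i : Fin n) (t : ℝ), 0 ≤ mf (fun s => f i s + I s) t := fun i t =>
    Real.sSup_nonneg (by rintro x ⟨u, hu, rfl⟩; exact le_max_right _ _)
  have hgc : ∀ i : Fin n, ContinuousOn (fun u => max (-(f i u + I u)) 0) (Icc 0 T) :=
    fun i => (((hf i).add hIc).neg).sup continuousOn_const
  have hmbdd : ∀ (i : Fin n) (t : ℝ), t ≤ T →
      BddAbove ((fun u => max (-(f i u + I u)) 0) '' Icc 0 t) := fun i t ht =>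
    (isCompact_Icc.image_of_continuousOn ((hgc i).mono (Icc_subset_Icc_right ht))).bddAbove
  have hm_mono : ∀ (i : Fin n) (s t : ℝ), 0 ≤ s → s ≤ t → t ≤ T →
      mf (fun u => f i u + I u) s ≤ mf (fun u => f i u + I u) t := by
    intro i s t hs hst htT
    exact csSup_le_csSup (hmbdd i t htT) (((nonempty_Icc).mpr hs).image _)
      (image_mono (Icc_subset_Icc_right hst))
  have hV_nonneg : ∀ s ∈ Icc (0:ℝ) T, 0 ≤ V s := by
    intro s hs
    rw [hVeq s hs]
    have : 0 ≤ (K / (n:ℝ)) * ∑ i, mf (fun u => f i u + I u) s :=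
      mul_nonneg (div_nonneg hK hn0.le) (Finset.sum_nonneg fun i _ => hm_nonneg i s)
    linarith
  have hVint : ∀ a b : ℝ, 0 ≤ a → a ≤ b → b ≤ T → IntervalIntegrable V MeasureTheory.volume a b := by
    intro a b ha hab hbT
    have : ContinuousOn V (Set.uIcc a b) := by
      rw [Set.uIcc_of_le hab]; exact hVc.mono (Icc_subset_Icc ha hbT)
    exact this.intervalIntegrable
  have hI_nonneg : ∀ t ∈ Icc (0:ℝ) T, 0 ≤ I t := by
    intro t ht
    rw [hIeq t ht]
    exact intervalIntegral.integral_nonneg ht.1 (fun u hu => hV_nonneg u ⟨hu.1, hu.2.trans ht.2⟩)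
  have hm_le : ∀ (i : Fin n) (t : ℝ), 0 ≤ t → t ≤ T → mf (fun u => f i u + I u) t ≤ Fi i := by
    intro i t ht htT
    apply Real.sSup_le _ (hFi0 i)
    rintro x ⟨u, hu, rfl⟩
    have hu' : u ∈ Icc (0:ℝ) T := ⟨hu.1, hu.2.trans htT⟩
    have h1 := hFi_le i u hu'
    have h2 := hI_nonneg u hu'
    have h3 : -(f i u) ≤ |f i u| := neg_le_abs _
    exact max_le (by show -(f i u + I u) ≤ Fi i; linarith) (hFi0 i)
  -- the V bound
  have hVle : ∀ (s t : ℝ), 0 ≤ s → s ≤ t → t ≤ T →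
      V s ≤ (K / (n:ℝ)) * ∑ i, mf (fun u => f i u + I u) t := by
    intro s t hs hst htT
    rw [hVeq s ⟨hs, hst.trans htT⟩]
    have : ∑ i, mf (fun u => f i u + I u) s ≤ ∑ i, mf (fun u => f i u + I u) t :=
      Finset.sum_le_sum fun i _ => hm_mono i s t hs hst htT
    have := mul_le_mul_of_nonneg_left this (div_nonneg hK hn0.le)
    linarith
  -- main induction
  have key : ∀ M : ℕ, 1 ≤ M → ∀ t ∈ Icc (0:ℝ) (min ((M:ℝ)*ε) T),
      |Jl t - I t| ≤ (1+K*ε)^(M-1) * (K*ε/(n:ℝ)) *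
        ∑ i, mf (fun s => f i s + I s) (min ((M:ℝ)*ε) T) := by
    intro M hM
    induction M, hM using Nat.le_induction with
    | base =>
      intro t ht
      simp only [Nat.cast_one, one_mul] at ht ⊢
      have htT : t ∈ Icc (0:ℝ) T := ⟨ht.1, ht.2.trans (min_le_right _ _)⟩
      have hJt : Jl t = 0 := hJ0 t ht
      set C : ℝ := (K / (n:ℝ)) * ∑ i, mf (fun s => f i s + I s) (min ε T) with hC
      have hC0 : 0 ≤ C :=
        mul_nonneg (div_nonneg hK hn0.le) (Finset.sum_nonneg fun i _ => hm_nonneg i _)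
      have hIb : |I t| ≤ C * |t - 0| := by
        rw [hIeq t htT, ← Real.norm_eq_abs]
        apply intervalIntegral.norm_integral_le_of_norm_le_const
        intro s hs
        rw [Set.uIoc_of_le ht.1] at hs
        have hs0 : 0 ≤ s := hs.1.le
        have hst : s ≤ min ε T := hs.2.trans ht.2
        have := hVle s (min ε T) hs0 hst (min_le_right _ _)
        have := hV_nonneg s ⟨hs0, hst.trans (min_le_right _ _)⟩
        rw [Real.norm_eq_abs, abs_of_nonneg (by assumption)]
        exact by assumption
      have ht2 : |t - 0| ≤ ε := by
        rw [sub_zero, abs_of_nonneg ht.1]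
        exact ht.2.trans (min_le_left _ _)
      have : |I t| ≤ C * ε := hIb.trans (mul_le_mul_of_nonneg_left ht2 hC0)
      rw [hJt, zero_sub, abs_neg, pow_zero, one_mul]
      calc |I t| ≤ C * ε := this
        _ = K * ε / (n:ℝ) * ∑ i, mf (fun s => f i s + I s) (min ε T) := by rw [hC]; ring
    | succ M hM ih =>
      have h1K : (1:ℝ) ≤ 1 + K * ε := by nlinarith
      have hpowM : (1+K*ε)^(M-1) ≤ (1+K*ε)^M := pow_le_pow_right₀ h1K (Nat.sub_le M 1)
      have hcast : ((M+1 : ℕ):ℝ) = (M:ℝ) + 1 := by push_cast; ring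
      intro t ht
      rw [hcast] at ht
      simp only [hcast, Nat.add_sub_cancel]
      rcases le_or_gt T ((M:ℝ)*ε) with hTM | hTM
      · -- past the horizon
        have e1 : min (((M:ℝ)+1)*ε) T = T := min_eq_right (hTM.trans (by nlinarith))
        have e2 : min ((M:ℝ)*ε) T = T := min_eq_right hTM
        rw [e1] at ht ⊢
        have := ih t (by rw [e2]; exact ht)
        rw [e2] at this
        have hS0 : 0 ≤ K*ε/(n:ℝ) * ∑ i, mf (fun s => f i s + I s) T :=
          mul_nonneg (by positivity) (Finset.sum_nonneg fun i _ => hm_nonneg i _)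
        calc |Jl t - I t| ≤ (1+K*ε)^(M-1) * (K*ε/(n:ℝ) * ∑ i, mf (fun s => f i s + I s) T) := by
              rw [← mul_assoc]; exact this
          _ ≤ (1+K*ε)^M * (K*ε/(n:ℝ) * ∑ i, mf (fun s => f i s + I s) T) :=
              mul_le_mul_of_nonneg_right hpowM hS0
          _ = (1+K*ε)^M * (K*ε/(n:ℝ)) * ∑ i, mf (fun s => f i s + I s) T := by ring
      · -- main step: M*ε < T
        have hMεT : (M:ℝ)*ε ≤ T := hTM.le
        have e2 : min ((M:ℝ)*ε) T = (M:ℝ)*ε := min_eq_left hMεT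
        rw [e2] at ih
        have hMε0 : (0:ℝ) ≤ (M:ℝ)*ε := by positivity
        set t1 : ℝ := min (((M:ℝ)+1)*ε) T with ht1def
        have hMε_le_t1 : (M:ℝ)*ε ≤ t1 := le_min (by nlinarith) hMεT
        have ht1T : t1 ≤ T := min_le_right _ _
        have ht1ε : t1 ≤ (M:ℝ)*ε + ε := (min_le_left _ _).trans_eq (by ring)
        set SM : ℝ := ∑ i, mf (fun s => f i s + I s) ((M:ℝ)*ε) with hSMdef
        have hSM0 : 0 ≤ SM := Finset.sum_nonneg fun i _ => hm_nonneg i _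
        set B : ℝ := (1+K*ε)^(M-1) * (K*ε/(n:ℝ)) * SM with hBdef
        have hB0 : 0 ≤ B := mul_nonneg (mul_nonneg (pow_nonneg (by nlinarith) _) (by positivity)) hSM0
        have hJm_ub : ∀ i : Fin n, ∀ x ∈ ((fun u => max (-(f i u + Jl u)) 0) '' Icc 0 ((M:ℝ)*ε)),
            x ≤ mf (fun s => f i s + I s) ((M:ℝ)*ε) + B := by
          rintro i x ⟨u, hu, rfl⟩
          have hIu := ih u hu
          have hle : max (-(f i u + I u)) 0 ≤ mf (fun s => f i s + I s) ((M:ℝ)*ε) :=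
            le_csSup (hmbdd i _ hMεT) (mem_image_of_mem _ hu)
          have h1 : -(Jl u - I u) ≤ |Jl u - I u| := neg_le_abs _
          have h2 := le_max_left (-(f i u + I u)) (0:ℝ)
          have h0 := hm_nonneg i ((M:ℝ)*ε)
          have h4 := le_max_right (-(f i u + I u)) (0:ℝ)
          show max (-(f i u + Jl u)) 0 ≤ _
          exact max_le (by linarith) (by linarith)
        have hJm_le : ∀ i : Fin n,
            sSup ((fun u => max (-(f i u + Jl u)) 0) '' Icc 0 ((M:ℝ)*ε))
              ≤ mf (fun s => f i s + I s) ((M:ℝ)*ε) + B := fun i =>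
          Real.sSup_le (hJm_ub i) (by have := hm_nonneg i ((M:ℝ)*ε); linarith)
        have hJm_nonneg : ∀ i : Fin n,
            0 ≤ sSup ((fun u => max (-(f i u + Jl u)) 0) '' Icc 0 ((M:ℝ)*ε)) :=
          fun i => Real.sSup_nonneg (by rintro x ⟨u, hu, rfl⟩; exact le_max_right _ _)
        have hm_le_Jm : ∀ i : Fin n, mf (fun s => f i s + I s) ((M:ℝ)*ε)
            ≤ sSup ((fun u => max (-(f i u + Jl u)) 0) '' Icc 0 ((M:ℝ)*ε)) + B := by
          intro i
          apply Real.sSup_le _ (by have := hJm_nonneg i; linarith)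
          rintro x ⟨u, hu, rfl⟩
          have hIu := ih u hu
          have hle : max (-(f i u + Jl u)) 0
              ≤ sSup ((fun u => max (-(f i u + Jl u)) 0) '' Icc 0 ((M:ℝ)*ε)) :=
            le_csSup ⟨_, hJm_ub i⟩ (mem_image_of_mem _ hu)
          have h1 : (Jl u - I u) ≤ |Jl u - I u| := le_abs_self _
          have h2 := le_max_left (-(f i u + Jl u)) (0:ℝ)
          have h0 := hJm_nonneg i
          show max (-(f i u + I u)) 0 ≤ _
          exact max_le (by linarith) (by linarith)
        rcases le_or_gt t ((M:ℝ)*ε) with htM | htM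
        · -- t still in the old region
          have hIu := ih t ⟨ht.1, htM⟩
          have hSle : SM ≤ ∑ i, mf (fun s => f i s + I s) t1 := by
            rw [hSMdef]
            exact Finset.sum_le_sum fun i _ => hm_mono i _ _ hMε0 hMε_le_t1 ht1T
          calc |Jl t - I t| ≤ B := hIu
            _ = (1+K*ε)^(M-1) * (K*ε/(n:ℝ)) * SM := hBdef
            _ ≤ (1+K*ε)^M * (K*ε/(n:ℝ)) * ∑ i, mf (fun s => f i s + I s) t1 :=
                mul_le_mul (mul_le_mul_of_nonneg_right hpowM (by positivity)) hSle hSM0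
                  (by positivity)
        · -- t in the new interval
          have htT' : t ∈ Icc (0:ℝ) T := ⟨ht.1, ht.2.trans ht1T⟩
          have hJt := hJrec M hM t ⟨⟨htM.le, ht.2.trans (min_le_left _ _)⟩, htT'⟩
          have hIMε := hIeq ((M:ℝ)*ε) ⟨hMε0, hMεT⟩
          have hint2 := hVint ((M:ℝ)*ε) t hMε0 htM.le htT'.2
          have hIt : I t - I ((M:ℝ)*ε) = ∫ s in ((M:ℝ)*ε)..t, V s := by
            have hadd := intervalIntegral.integral_add_adjacent_intervals
              (hVint 0 ((M:ℝ)*ε) le_rfl hMε0 hMεT) hint2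
            rw [hIeq t htT', hIMε, ← hadd]; ring
          set S : ℝ := K / (n:ℝ) *
            ∑ i, sSup ((fun u => max (-(f i u + Jl u)) 0) '' Icc 0 ((M:ℝ)*ε)) with hSdef
          set Δ : ℝ := ∑ i, (mf (fun s => f i s + I s) t1
            - mf (fun s => f i s + I s) ((M:ℝ)*ε)) with hΔdef
          have hΔ0 : 0 ≤ Δ :=
            Finset.sum_nonneg fun i _ => sub_nonneg.mpr (hm_mono i _ _ hMε0 hMε_le_t1 ht1T)
          set C' : ℝ := K * B + K / (n:ℝ) * Δ with hC'def
          have hC'0 : 0 ≤ C' := by positivity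
          have hbound : ∀ s ∈ Set.uIoc ((M:ℝ)*ε) t, ‖S - V s‖ ≤ C' := by
            intro s hs
            rw [Set.uIoc_of_le htM.le] at hs
            have hs0 : 0 ≤ s := hMε0.trans hs.1.le
            have hsT : s ≤ T := hs.2.trans htT'.2
            have hst1 : s ≤ t1 := hs.2.trans ht.2
            have hVs := hVeq s ⟨hs0, hsT⟩
            have hterm : ∀ i : Fin n,
                |sSup ((fun u => max (-(f i u + Jl u)) 0) '' Icc 0 ((M:ℝ)*ε))
                  - mf (fun s => f i s + I s) s|
                ≤ B + (mf (fun s => f i s + I s) t1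
                    - mf (fun s => f i s + I s) ((M:ℝ)*ε)) := by
              intro i
              have h1 := hJm_le i
              have h2 := hm_le_Jm i
              have h3 := hm_mono i ((M:ℝ)*ε) s hMε0 hs.1.le hsT
              have h4 := hm_mono i s t1 hs0 hst1 ht1T
              rw [abs_sub_le_iff]
              constructor <;> linarith
            have e : S - V s = K / (n:ℝ) *
                ∑ i, (sSup ((fun u => max (-(f i u + Jl u)) 0) '' Icc 0 ((M:ℝ)*ε))
                  - mf (fun s => f i s + I s) s) := by
              rw [hVs, hSdef, Finset.sum_sub_distrib]; ring
            rw [Real.norm_eq_abs, e, abs_mul,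
              abs_of_nonneg (by positivity : (0:ℝ) ≤ K / (n:ℝ))]
            have habs : |∑ i, (sSup ((fun u => max (-(f i u + Jl u)) 0) '' Icc 0 ((M:ℝ)*ε))
                  - mf (fun s => f i s + I s) s)|
                ≤ ∑ i, (B + (mf (fun s => f i s + I s) t1
                    - mf (fun s => f i s + I s) ((M:ℝ)*ε))) :=
              (Finset.abs_sum_le_sum_abs _ _).trans (Finset.sum_le_sum fun i _ => hterm i)
            have hsum : ∑ i, (B + (mf (fun s => f i s + I s) t1
                  - mf (fun s => f i s + I s) ((M:ℝ)*ε))) = (n:ℝ) * B + Δ := by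
              rw [hΔdef, Finset.sum_add_distrib, Finset.sum_const, Finset.card_univ,
                Fintype.card_fin, nsmul_eq_mul]
            calc K / (n:ℝ) * |∑ i, (sSup ((fun u => max (-(f i u + Jl u)) 0) '' Icc 0 ((M:ℝ)*ε))
                  - mf (fun s => f i s + I s) s)|
                ≤ K / (n:ℝ) * ((n:ℝ) * B + Δ) :=
                  mul_le_mul_of_nonneg_left (habs.trans_eq hsum) (by positivity)
              _ = C' := by rw [hC'def]; field_simp
          have hintdiff : S * (t - (M:ℝ)*ε) - (∫ s in ((M:ℝ)*ε)..t, V s)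
              = ∫ s in ((M:ℝ)*ε)..t, (S - V s) := by
            rw [intervalIntegral.integral_sub intervalIntegrable_const hint2,
              intervalIntegral.integral_const, smul_eq_mul]
            ring
          have hib : |S * (t - (M:ℝ)*ε) - ∫ s in ((M:ℝ)*ε)..t, V s| ≤ C' * |t - (M:ℝ)*ε| := by
            rw [hintdiff, ← Real.norm_eq_abs]
            exact intervalIntegral.norm_integral_le_of_norm_le_const hbound
          have htdist : |t - (M:ℝ)*ε| ≤ ε := by
            rw [abs_of_nonneg (by linarith)]
            have := ht.2
            linarith
          have hJmIM : |Jl ((M:ℝ)*ε) - I ((M:ℝ)*ε)| ≤ B := ih ((M:ℝ)*ε) ⟨hMε0, le_rfl⟩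
          have hsplit : Jl t - I t = (Jl ((M:ℝ)*ε) - I ((M:ℝ)*ε))
              + (S * (t - (M:ℝ)*ε) - ∫ s in ((M:ℝ)*ε)..t, V s) := by
            rw [hJt]; linarith [hIt]
          have hfinal : |Jl t - I t| ≤ B + C' * ε := by
            rw [hsplit]
            calc |(Jl ((M:ℝ)*ε) - I ((M:ℝ)*ε))
                  + (S * (t - (M:ℝ)*ε) - ∫ s in ((M:ℝ)*ε)..t, V s)|
                ≤ |Jl ((M:ℝ)*ε) - I ((M:ℝ)*ε)|
                  + |S * (t - (M:ℝ)*ε) - ∫ s in ((M:ℝ)*ε)..t, V s| := abs_add_le _ _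
              _ ≤ B + C' * ε :=
                  add_le_add hJmIM (hib.trans (mul_le_mul_of_nonneg_left htdist hC'0))
          have hpowsucc : (1+K*ε)^(M-1) * (1+K*ε) = (1+K*ε)^M := by
            rw [← pow_succ]; congr 1; omega
          have hpowM1 : (1:ℝ) ≤ (1+K*ε)^M := one_le_pow₀ h1K
          have hsum_t1 : ∑ i, mf (fun s => f i s + I s) t1 = SM + Δ := by
            rw [hΔdef, hSMdef, Finset.sum_sub_distrib]; ring
          have hcε : (0:ℝ) ≤ K*ε/(n:ℝ) := by positivity
          have h3 : K*ε/(n:ℝ) * Δ ≤ (1+K*ε)^M * (K*ε/(n:ℝ)) * Δ := by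
            have h5 := mul_nonneg (sub_nonneg.mpr hpowM1) (mul_nonneg hcε hΔ0)
            nlinarith [h5]
          calc |Jl t - I t| ≤ B + C' * ε := hfinal
            _ = (1+K*ε) * B + K*ε/(n:ℝ) * Δ := by rw [hC'def]; ring
            _ = (1+K*ε)^M * (K*ε/(n:ℝ)) * SM + K*ε/(n:ℝ) * Δ := by
                rw [hBdef, ← hpowsucc]; ring
            _ ≤ (1+K*ε)^M * (K*ε/(n:ℝ)) * SM + (1+K*ε)^M * (K*ε/(n:ℝ)) * Δ := by linarith
            _ = (1+K*ε)^M * (K*ε/(n:ℝ)) * ∑ i, mf (fun s => f i s + I s) t1 := by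
                rw [hsum_t1]; ring

  -- conclude
  set N : ℕ := ⌈T/ε⌉₊ with hNdef
  have hNpos : 0 < N := Nat.ceil_pos.mpr (div_pos hT hε)
  have hN1 : 1 ≤ N := hNpos
  have hTN : T ≤ (N:ℝ)*ε := by
    have := Nat.le_ceil (T/ε)
    rw [div_le_iff₀ hε] at this
    exact this
  have hminT : min ((N:ℝ)*ε) T = T := min_eq_right hTN
  have hkeyT := key N hN1
  rw [hminT] at hkeyT
  have hN1ε : ((N-1:ℕ):ℝ) * ε ≤ T := by
    have h := Nat.lt_ceil.mp (show N-1 < ⌈T/ε⌉₊ by omega)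
    have := (lt_div_iff₀ hε).mp h
    linarith
  have h1K : (1:ℝ) ≤ 1 + K * ε := by nlinarith
  have hexp : (1+K*ε)^(N-1) ≤ Real.exp (K*T) := by
    have h1 : (1+K*ε) ≤ Real.exp (K*ε) := by
      have := Real.add_one_le_exp (K*ε); linarith
    calc (1+K*ε)^(N-1) ≤ Real.exp (K*ε)^(N-1) := pow_le_pow_left₀ (by linarith) h1 _
      _ = Real.exp (((N-1:ℕ):ℝ) * (K*ε)) := (Real.exp_nat_mul _ _).symm
      _ ≤ Real.exp (K*T) := Real.exp_le_exp.mpr (by nlinarith)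
  have hFsum : ∑ i, mf (fun s => f i s + I s) T ≤ ∑ i, Fi i :=
    Finset.sum_le_sum fun i _ => hm_le i T hT.le le_rfl
  have hF0 : 0 ≤ ∑ i, Fi i := Finset.sum_nonneg fun i _ => hFi0 i
  apply Real.sSup_le
  · rintro x ⟨t, ht, rfl⟩
    have h1 := hkeyT t ht
    have hSM0 : 0 ≤ ∑ i, mf (fun s => f i s + I s) T :=
      Finset.sum_nonneg fun i _ => hm_nonneg i _
    have hcε : (0:ℝ) ≤ K*ε/(n:ℝ) := by positivity
    calc |Jl t - I t| ≤ (1+K*ε)^(N-1) * (K*ε/(n:ℝ)) * ∑ i, mf (fun s => f i s + I s) T := h1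
      _ ≤ Real.exp (K*T) * (K*ε/(n:ℝ)) * ∑ i, Fi i :=
          mul_le_mul (mul_le_mul_of_nonneg_right hexp hcε) hFsum hSM0 (by positivity)
      _ ≤ ((2+K) * (∑ i, Fi i) / (n:ℝ)) * ε * Real.exp (K*T) := by
          have he : Real.exp (K*T) * (K*ε/(n:ℝ)) * ∑ i, Fi i
              = (K * (∑ i, Fi i) / (n:ℝ)) * ε * Real.exp (K*T) := by ring
          rw [he]
          apply mul_le_mul_of_nonneg_right _ (Real.exp_nonneg _)
          apply mul_le_mul_of_nonneg_right _ hε.le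
          gcongr
          nlinarith
  · exact mul_nonneg (mul_nonneg (div_nonneg (mul_nonneg (by linarith) hF0) hn0.le) hε.le)
      (Real.exp_nonneg _)
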